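/- Let 𝒞=(C,w) be a positive-weighted caterpillar with V(C)={1,...,n}, let x₁,x₂ be the endpoints of the spine of C, and let X₁ (respectively X₂) be the set of leaves of C adjacent to x₁ (respectively x₂). If a,b ∈ V(C) are such that D_{a,b}(𝒞) − t_a − t_b = max_{i,j ∈ [n]} { D_{i,j}(𝒞) − t_i − t_j }, then a ∈ X₁∪{x₁} and b ∈ X₂∪{x₂}, or vice versa. -/
import Mathlib


open SimpleGraph

variable {V : Type*}

/-- weight of a walk: sum of the weights of its edges -/
noncomputable def walkWeight (G : SimpleGraph V) (w : Sym2 V → ℝ) {i j : V} (p : G.Walk i j) : ℝ :=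
  (p.edges.map w).sum

/-- the 2-weight: min over paths joining i and j -/
noncomputable def wdist (G : SimpleGraph V) (w : Sym2 V → ℝ) (i j : V) : ℝ :=
  sInf {x : ℝ | ∃ p : G.Walk i j, p.IsPath ∧ walkWeight G w p = x}

def Realizes (G : SimpleGraph V) (w : Sym2 V → ℝ) {i j : V} (p : G.Walk i j) : Prop :=
  p.IsPath ∧ walkWeight G w p = wdist G w i j

def UsefulEdge (G : SimpleGraph V) (w : Sym2 V → ℝ) (e : Sym2 V) : Prop :=
  ∃ a b : V, a ≠ b ∧ ∀ p : G.Walk a b, Realizes G w p → e ∈ p.edges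

def Pruned (G : SimpleGraph V) (w : Sym2 V → ℝ) : Prop :=
  ∀ e ∈ G.edgeSet, UsefulEdge G w e

def PosWeights (G : SimpleGraph V) (w : Sym2 V → ℝ) : Prop :=
  ∀ e ∈ G.edgeSet, 0 < w e

def Indec (G : SimpleGraph V) (w : Sym2 V → ℝ) (i j : V) : Prop :=
  ∀ z : V, z ≠ i → z ≠ j → wdist G w i j < wdist G w i z + wdist G w z j

def IsLeaf (G : SimpleGraph V) (v : V) : Prop := (G.neighborSet v).ncard = 1

def IsSnake (G : SimpleGraph V) : Prop :=
  G.IsTree ∧ {v : V | IsLeaf G v}.ncard = 2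

def IsCaterpillar (G : SimpleGraph V) : Prop :=
  G.IsTree ∧ ∃ (x₁ x₂ : V) (p : G.Walk x₁ x₂), p.IsPath ∧
    {v : V | v ∈ p.support} = {v : V | 2 ≤ (G.neighborSet v).ncard}

def IsPolygon {n : ℕ} [NeZero n] (G : SimpleGraph (Fin n)) : Prop :=
  ∃ σ : Equiv.Perm (Fin n), G.edgeSet = Set.range (fun i : Fin n => s(σ i, σ (i + 1)))

noncomputable def tmin (G : SimpleGraph V) (w : Sym2 V → ℝ) (x : V) : ℝ :=
  (1 / 2) * sInf {r : ℝ | ∃ y z : V, y ≠ x ∧ z ≠ x ∧ y ≠ z ∧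
    r = wdist G w x y + wdist G w x z - wdist G w y z}

def IsBipartiteOn (G : SimpleGraph V) (X Y : Set V) : Prop :=
  X ∩ Y = ∅ ∧ X ∪ Y = Set.univ ∧ ∀ a b : V, G.Adj a b → (a ∈ X ∧ b ∈ Y) ∨ (a ∈ Y ∧ b ∈ X)

noncomputable def chainSum {α : Type*} (D : α → α → ℝ) : List α → ℝ
  | [] => 0
  | [_] => 0
  | a :: b :: l => D a b + chainSum D (b :: l)

def FIndec {n : ℕ} (D : Fin n → Fin n → ℝ) (i j : Fin n) : Prop :=
  ∀ z : Fin n, z ≠ i → z ≠ j → D i j < D i z + D z j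

def TriangleIneq {n : ℕ} (D : Fin n → Fin n → ℝ) : Prop :=
  ∀ i j k : Fin n, i ≠ j → j ≠ k → i ≠ k → D i j ≤ D i k + D k j

def MaxTwice (x y z : ℝ) : Prop :=
  (x = y ∧ z ≤ x) ∨ (x = z ∧ y ≤ x) ∨ (y = z ∧ x ≤ y)

def FourPoint {n : ℕ} (D : Fin n → Fin n → ℝ) : Prop :=
  ∀ i j k h : Fin n, i ≠ j → i ≠ k → i ≠ h → j ≠ k → j ≠ h → k ≠ h →
    MaxTwice (D i j + D k h) (D i k + D j h) (D i h + D k j)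

def MedianFamily {n : ℕ} (D : Fin n → Fin n → ℝ) : Prop :=
  ∀ a b c : Fin n, ∃! m : Fin n,
    ∀ i ∈ ({a, b, c} : Set (Fin n)), ∀ j ∈ ({a, b, c} : Set (Fin n)), i ≠ j →
      D i j = D i m + D j m

noncomputable def tminF {n : ℕ} (D : Fin n → Fin n → ℝ) (x : Fin n) : ℝ :=
  (1 / 2) * sInf {r : ℝ | ∃ y z : Fin n, y ≠ x ∧ z ≠ x ∧ y ≠ z ∧ r = D x y + D x z - D y z}

def interiorSet {G : SimpleGraph V} {u v : V} (p : G.Walk u v) : Set V :=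
  {x : V | x ∈ p.support ∧ x ≠ u ∧ x ≠ v}

section Infra
set_option linter.unusedSectionVars false

variable [Fintype V] [DecidableEq V] {G : SimpleGraph V} {w : Sym2 V → ℝ}

lemma walkWeight_nil {i : V} : walkWeight G w (Walk.nil : G.Walk i i) = 0 := by
  simp [walkWeight]

lemma walkWeight_cons {i j k : V} (h : G.Adj i j) (p : G.Walk j k) :
    walkWeight G w (Walk.cons h p) = w s(i, j) + walkWeight G w p := by
  simp [walkWeight]

lemma walkWeight_append {i j k : V} (p : G.Walk i j) (q : G.Walk j k) :
    walkWeight G w (p.append q) = walkWeight G w p + walkWeight G w q := by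
  simp [walkWeight, Walk.edges_append]

lemma walkWeight_reverse {i j : V} (p : G.Walk i j) :
    walkWeight G w p.reverse = walkWeight G w p := by
  simp [walkWeight, Walk.edges_reverse, List.sum_reverse]

lemma walkWeight_nonneg (hw : PosWeights G w) {i j : V} (p : G.Walk i j) :
    0 ≤ walkWeight G w p := by
  apply List.sum_nonneg
  rintro x hx
  obtain ⟨e, he, rfl⟩ := List.mem_map.mp hx
  exact (hw e (p.edges_subset_edgeSet he)).le

lemma walkWeight_pos (hw : PosWeights G w) {i j : V} (hij : i ≠ j) (p : G.Walk i j) :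
    0 < walkWeight G w p := by
  cases p with
  | nil => exact absurd rfl hij
  | @cons _ b _ h q =>
    rw [walkWeight_cons]
    have h1 : 0 < w s(i, b) := hw _ h
    have h2 : 0 ≤ walkWeight G w q := walkWeight_nonneg hw q
    linarith

lemma wdist_eq (ht : G.IsTree) {i j : V} (P : G.Walk i j) (hP : P.IsPath) :
    wdist G w i j = walkWeight G w P := by
  have hset : {x : ℝ | ∃ p : G.Walk i j, p.IsPath ∧ walkWeight G w p = x}
      = {walkWeight G w P} := by
    ext x
    constructor
    · rintro ⟨q, hq, rfl⟩
      have : q = P := (ht.existsUnique_path i j).unique hq hP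
      simp [this]
    · rintro rfl; exact ⟨P, hP, rfl⟩
  rw [wdist, hset, csInf_singleton]

lemma wdist_self (ht : G.IsTree) (i : V) : wdist G w i i = 0 := by
  rw [wdist_eq ht (Walk.nil : G.Walk i i) Walk.IsPath.nil, walkWeight_nil]

lemma wdist_symm (ht : G.IsTree) (i j : V) : wdist G w i j = wdist G w j i := by
  obtain ⟨P, hP, -⟩ := ht.existsUnique_path i j
  rw [wdist_eq ht P hP, wdist_eq ht P.reverse hP.reverse, walkWeight_reverse]

lemma wdist_adj (ht : G.IsTree) {i j : V} (h : G.Adj i j) : wdist G w i j = w s(i, j) := by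
  have hP : (Walk.cons h Walk.nil).IsPath := by
    simp [Walk.cons_isPath_iff, h.ne]
  rw [wdist_eq ht _ hP, walkWeight_cons, walkWeight_nil, add_zero]

lemma wdist_nonneg (ht : G.IsTree) (hw : PosWeights G w) (i j : V) : 0 ≤ wdist G w i j := by
  obtain ⟨P, hP, -⟩ := ht.existsUnique_path i j
  rw [wdist_eq ht P hP]
  exact walkWeight_nonneg hw P

lemma wdist_pos (ht : G.IsTree) (hw : PosWeights G w) {i j : V} (hij : i ≠ j) :
    0 < wdist G w i j := by
  obtain ⟨P, hP, -⟩ := ht.existsUnique_path i j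
  rw [wdist_eq ht P hP]
  exact walkWeight_pos hw hij P

lemma eq_of_wdist_nonpos (ht : G.IsTree) (hw : PosWeights G w) {i j : V}
    (h : wdist G w i j ≤ 0) : i = j := by
  by_contra hij
  exact absurd h (not_le.mpr (wdist_pos ht hw hij))

lemma sum_le_sum_of_subperm {l₁ l₂ : List ℝ} (h : l₁.Subperm l₂)
    (h0 : ∀ x ∈ l₂, (0:ℝ) ≤ x) : l₁.sum ≤ l₂.sum := by
  have hle : (↑l₁ : Multiset ℝ) ≤ ↑l₂ := Multiset.coe_le.mpr h
  obtain ⟨u, hu⟩ := Multiset.le_iff_exists_add.mp hle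
  have h2 : (↑l₂ : Multiset ℝ).sum = (↑l₁ : Multiset ℝ).sum + u.sum := by
    rw [hu, Multiset.sum_add]
  have h3 : (0:ℝ) ≤ u.sum := Multiset.sum_nonneg (fun x hx => h0 x (by
    have : x ∈ (↑l₂ : Multiset ℝ) := by rw [hu]; exact Multiset.mem_add.mpr (Or.inr hx)
    simpa using this))
  simp only [Multiset.sum_coe] at h2
  linarith

lemma walkWeight_bypass_le (hw : PosWeights G w) {i j : V} (p : G.Walk i j) :
    walkWeight G w p.bypass ≤ walkWeight G w p := by
  apply sum_le_sum_of_subperm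
  · obtain ⟨l, hperm, hsub⟩ :=
      List.subperm_of_subset p.bypass_isPath.edges_nodup p.edges_bypass_subset
    exact ⟨l.map w, hperm.map w, hsub.map w⟩
  · rintro x hx
    obtain ⟨e, he, rfl⟩ := List.mem_map.mp hx
    exact (hw e (p.edges_subset_edgeSet he)).le

lemma wdist_triangle (ht : G.IsTree) (hw : PosWeights G w) (i j k : V) :
    wdist G w i k ≤ wdist G w i j + wdist G w j k := by
  obtain ⟨P, hP, -⟩ := ht.existsUnique_path i j
  obtain ⟨Q, hQ, -⟩ := ht.existsUnique_path j k
  rw [wdist_eq ht P hP, wdist_eq ht Q hQ,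
    wdist_eq ht (P.append Q).bypass (P.append Q).bypass_isPath]
  calc walkWeight G w (P.append Q).bypass ≤ walkWeight G w (P.append Q) :=
        walkWeight_bypass_le hw _
    _ = walkWeight G w P + walkWeight G w Q := walkWeight_append P Q

lemma wdist_add_of_mem (ht : G.IsTree) {i k : V} {P : G.Walk i k} (hP : P.IsPath)
    {j : V} (hj : j ∈ P.support) :
    wdist G w i k = wdist G w i j + wdist G w j k := by
  rw [wdist_eq ht P hP, wdist_eq ht (P.takeUntil j hj) (hP.takeUntil hj),
    wdist_eq ht (P.dropUntil j hj) (hP.dropUntil hj),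
    ← walkWeight_append, Walk.take_spec]

end Infra

section Helper

set_option linter.unusedSectionVars false

variable [Fintype V] [DecidableEq V] {G : SimpleGraph V} {w : Sym2 V → ℝ}

lemma neighborSet_eq_singleton {v u : V} (hleaf : IsLeaf G v) (hu : G.Adj v u) :
    G.neighborSet v = {u} := by
  obtain ⟨a, ha⟩ := Set.ncard_eq_one.mp hleaf
  have hmem : u ∈ G.neighborSet v := hu
  rw [ha] at hmem ⊢
  rw [Set.mem_singleton_iff.mp hmem]

lemma leaf_first_step (ht : G.IsTree) {v u : V} (hleaf : IsLeaf G v) (hu : G.Adj v u)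
    {z : V} (hz : z ≠ v) :
    wdist G w v z = wdist G w v u + wdist G w u z := by
  obtain ⟨P, hP, -⟩ := ht.existsUnique_path v z
  rw [wdist_eq ht P hP]
  cases P with
  | nil => exact absurd rfl hz
  | @cons _ b _ h q =>
    have hb : b ∈ G.neighborSet v := h
    rw [neighborSet_eq_singleton hleaf hu] at hb
    obtain rfl : b = u := Set.mem_singleton_iff.mp hb
    have hq : q.IsPath := ((Walk.cons_isPath_iff _ _).mp hP).1
    rw [walkWeight_cons, wdist_adj ht hu, wdist_eq ht q hq]

lemma exists_adj (ht : G.IsTree) {v z : V} (hz : z ≠ v) : ∃ u, G.Adj v u := by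
  obtain ⟨P, hP, -⟩ := ht.existsUnique_path v z
  cases P with
  | nil => exact absurd rfl hz
  | cons h q => exact ⟨_, h⟩

lemma two_le_deg_of_leaf_adj (ht : G.IsTree) {v u : V} (hleaf : IsLeaf G v) (hu : G.Adj v u)
    {z : V} (hzv : z ≠ v) (hzu : z ≠ u) : 2 ≤ (G.neighborSet u).ncard := by
  obtain ⟨P, hP, -⟩ := ht.existsUnique_path u z
  cases P with
  | nil => exact absurd rfl hzu
  | @cons _ b _ h q =>
    have hbv : b ≠ v := by
      rintro rfl
      have hns : u ∉ q.support := ((Walk.cons_isPath_iff _ _).mp hP).2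
      cases q with
      | nil => exact hzv rfl
      | @cons _ c _ h' q' =>
        have hc : c ∈ G.neighborSet b := h'
        rw [neighborSet_eq_singleton hleaf hu] at hc
        obtain rfl : c = u := Set.mem_singleton_iff.mp hc
        exact hns (by rw [Walk.support_cons]; exact List.mem_cons_of_mem _ q'.start_mem_support)
    refine ((Set.one_lt_ncard_iff (Set.toFinite _)).mpr ⟨v, b, hu.symm, h, hbv.symm⟩)

lemma tmin_eq_zero (ht : G.IsTree) (hw : PosWeights G w) {x : V}
    (hdeg : 2 ≤ (G.neighborSet x).ncard) : tmin G w x = 0 := by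
  obtain ⟨y, z, hy, hz, hyz⟩ := (Set.one_lt_ncard_iff (Set.toFinite _)).mp hdeg
  have hxy : G.Adj x y := hy
  have hxz : G.Adj x z := hz
  have hdyz : wdist G w y z = wdist G w x y + wdist G w x z := by
    have hP : (Walk.cons hxy.symm (Walk.cons hxz Walk.nil)).IsPath := by
      simp [Walk.cons_isPath_iff, hxz.ne', hyz, hxy.ne]
      exact ⟨hxz.ne, hxy.ne'⟩
    rw [wdist_eq ht _ hP, walkWeight_cons, walkWeight_cons, walkWeight_nil,
      wdist_adj ht hxy, wdist_adj ht hxz]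
    have hswap : s(y, x) = s(x, y) := Sym2.eq_swap
    rw [hswap]; ring
  have hmem : (0:ℝ) ∈ {r : ℝ | ∃ y z : V, y ≠ x ∧ z ≠ x ∧ y ≠ z ∧
      r = wdist G w x y + wdist G w x z - wdist G w y z} :=
    ⟨y, z, hxy.ne', hxz.ne', hyz, by rw [hdyz]; ring⟩
  have hlb : ∀ r ∈ {r : ℝ | ∃ y z : V, y ≠ x ∧ z ≠ x ∧ y ≠ z ∧
      r = wdist G w x y + wdist G w x z - wdist G w y z}, (0:ℝ) ≤ r := by
    rintro r ⟨y', z', -, -, -, rfl⟩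
    have t1 := wdist_triangle ht hw y' x z'
    have t2 := wdist_symm (w := w) ht x y'
    linarith
  have hinf : sInf {r : ℝ | ∃ y z : V, y ≠ x ∧ z ≠ x ∧ y ≠ z ∧
      r = wdist G w x y + wdist G w x z - wdist G w y z} = 0 :=
    le_antisymm (csInf_le ⟨0, hlb⟩ hmem) (le_csInf ⟨0, hmem⟩ hlb)
  have hdef : tmin G w x = (1/2) * sInf {r : ℝ | ∃ y z : V, y ≠ x ∧ z ≠ x ∧ y ≠ z ∧
      r = wdist G w x y + wdist G w x z - wdist G w y z} := rfl
  rw [hdef, hinf]; ring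

lemma tmin_leaf (ht : G.IsTree) (hw : PosWeights G w) {v u : V}
    (hleaf : IsLeaf G v) (hu : G.Adj v u) {z₀ : V} (h0v : z₀ ≠ v) (h0u : z₀ ≠ u) :
    tmin G w v = wdist G w v u := by
  have hmem : (2 * wdist G w v u) ∈ {r : ℝ | ∃ y z : V, y ≠ v ∧ z ≠ v ∧ y ≠ z ∧
      r = wdist G w v y + wdist G w v z - wdist G w y z} := by
    refine ⟨u, z₀, hu.ne', h0v, h0u.symm, ?_⟩
    have h1 : wdist G w v z₀ = wdist G w v u + wdist G w u z₀ := leaf_first_step ht hleaf hu h0v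
    linarith
  have hlb : ∀ r ∈ {r : ℝ | ∃ y z : V, y ≠ v ∧ z ≠ v ∧ y ≠ z ∧
      r = wdist G w v y + wdist G w v z - wdist G w y z}, (2 * wdist G w v u) ≤ r := by
    rintro r ⟨y, z, hy, hz, -, rfl⟩
    have h1 : wdist G w v y = wdist G w v u + wdist G w u y := leaf_first_step ht hleaf hu hy
    have h2 : wdist G w v z = wdist G w v u + wdist G w u z := leaf_first_step ht hleaf hu hz
    have t1 := wdist_triangle ht hw y u z
    have t2 := wdist_symm (w := w) ht u y
    linarith
  have hinf : sInf {r : ℝ | ∃ y z : V, y ≠ v ∧ z ≠ v ∧ y ≠ z ∧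
      r = wdist G w v y + wdist G w v z - wdist G w y z} = 2 * wdist G w v u :=
    le_antisymm (csInf_le ⟨_, hlb⟩ hmem) (le_csInf ⟨_, hmem⟩ hlb)
  have hdef : tmin G w v = (1/2) * sInf {r : ℝ | ∃ y z : V, y ≠ v ∧ z ≠ v ∧ y ≠ z ∧
      r = wdist G w v y + wdist G w v z - wdist G w y z} := rfl
  rw [hdef, hinf]; ring

lemma spine_bound (ht : G.IsTree) (hw : PosWeights G w) {x₁ x₂ : V} {p : G.Walk x₁ x₂}
    (hp : p.IsPath) {u v : V} (hu : u ∈ p.support) (hv : v ∈ p.support) :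
    wdist G w u v ≤ wdist G w x₁ x₂ ∧
      (wdist G w x₁ x₂ ≤ wdist G w u v → (u = x₁ ∧ v = x₂) ∨ (v = x₁ ∧ u = x₂)) := by
  have hsplit : wdist G w x₁ x₂ = wdist G w x₁ u + wdist G w u x₂ := wdist_add_of_mem ht hp hu
  have hv' : v ∈ (p.takeUntil u hu).support ∨ v ∈ (p.dropUntil u hu).support := by
    rw [← Walk.mem_support_append_iff, Walk.take_spec]; exact hv
  have hsym : wdist G w u v = wdist G w v u := wdist_symm ht u v
  rcases hv' with hv1 | hv2
  · have h2 : wdist G w x₁ u = wdist G w x₁ v + wdist G w v u :=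
      wdist_add_of_mem ht (hp.takeUntil hu) hv1
    have n1 := wdist_nonneg ht hw x₁ v
    have n2 := wdist_nonneg ht hw u x₂
    constructor
    · linarith
    · intro he
      have e1 : wdist G w x₁ v ≤ 0 := by linarith
      have e2 : wdist G w u x₂ ≤ 0 := by linarith
      exact Or.inr ⟨(eq_of_wdist_nonpos ht hw e1).symm, eq_of_wdist_nonpos ht hw e2⟩
  · have h2 : wdist G w u x₂ = wdist G w u v + wdist G w v x₂ :=
      wdist_add_of_mem ht (hp.dropUntil hu) hv2
    have n1 := wdist_nonneg ht hw x₁ u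
    have n2 := wdist_nonneg ht hw v x₂
    constructor
    · linarith
    · intro he
      have e1 : wdist G w x₁ u ≤ 0 := by linarith
      have e2 : wdist G w v x₂ ≤ 0 := by linarith
      exact Or.inl ⟨(eq_of_wdist_nonpos ht hw e1).symm, eq_of_wdist_nonpos ht hw e2⟩

lemma exists_third {n : ℕ} (hn : 3 ≤ n) (a b : Fin n) : ∃ c : Fin n, c ≠ a ∧ c ≠ b := by
  by_contra hcon
  push_neg at hcon
  have hsub : (Finset.univ : Finset (Fin n)) ⊆ {a, b} := by
    intro c _
    rcases eq_or_ne c a with rfl | hca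
    · simp
    · simp [hcon c hca]
  have h1 : n ≤ ({a, b} : Finset (Fin n)).card := by
    simpa using Finset.card_le_card hsub
  have h2 : ({a, b} : Finset (Fin n)).card ≤ 2 :=
    (Finset.card_insert_le _ _).trans (by simp)
  omega

end Helper


/-- In a positive-weighted caterpillar with spine from `x₁` to `x₂`, if `a, b` maximize
`D i j - t i - t j`, then `a` belongs to `X₁ ∪ {x₁}` and `b` to `X₂ ∪ {x₂}` or vice versa,
where `Xᵢ` is the set of leaves adjacent to `xᵢ`. -/
theorem stmt_3 {n : ℕ} (hn : 3 ≤ n) (C : SimpleGraph (Fin n)) (htree : C.IsTree)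
    (w : Sym2 (Fin n) → ℝ) (hw : PosWeights C w)
    (x₁ x₂ : Fin n) (p : C.Walk x₁ x₂) (hp : p.IsPath)
    (hspine : {v : Fin n | v ∈ p.support} = {v : Fin n | 2 ≤ (C.neighborSet v).ncard})
    (a b : Fin n) (hab : a ≠ b)
    (hmax : ∀ i j : Fin n, i ≠ j →
      wdist C w i j - tmin C w i - tmin C w j ≤ wdist C w a b - tmin C w a - tmin C w b) :
    (a ∈ insert x₁ {v : Fin n | IsLeaf C v ∧ C.Adj v x₁} ∧
        b ∈ insert x₂ {v : Fin n | IsLeaf C v ∧ C.Adj v x₂}) ∨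
      (b ∈ insert x₁ {v : Fin n | IsLeaf C v ∧ C.Adj v x₁} ∧
        a ∈ insert x₂ {v : Fin n | IsLeaf C v ∧ C.Adj v x₂}) := by
  
  classical
  have hdeg_iff : ∀ v : Fin n, v ∈ p.support ↔ 2 ≤ (C.neighborSet v).ncard := by
    intro v; exact Set.ext_iff.mp hspine v
  -- every vertex has an "anchor" on the spine
  have anchor : ∀ v : Fin n, ∃ σ : Fin n, σ ∈ p.support ∧
      (v = σ ∨ (IsLeaf C v ∧ C.Adj v σ)) ∧ tmin C w v = wdist C w v σ ∧
      ∀ z : Fin n, z ≠ v → wdist C w v z = wdist C w v σ + wdist C w σ z := by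
    intro v
    by_cases hv : 2 ≤ (C.neighborSet v).ncard
    · refine ⟨v, (hdeg_iff v).mpr hv, Or.inl rfl, ?_, ?_⟩
      · rw [tmin_eq_zero htree hw hv, wdist_self htree]
      · intro z hz; rw [wdist_self htree, zero_add]
    · obtain ⟨z₁, hz₁v, -⟩ := exists_third hn v v
      obtain ⟨u, hu⟩ := exists_adj htree hz₁v
      have hleaf : IsLeaf C v := by
        have h1 : 0 < (C.neighborSet v).ncard :=
          (Set.ncard_pos (Set.toFinite _)).mpr ⟨u, hu⟩
        have h2 : (C.neighborSet v).ncard < 2 := not_le.mp hv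
        have : (C.neighborSet v).ncard = 1 := by omega
        exact this
      obtain ⟨z₀, h0v, h0u⟩ := exists_third hn v u
      have hudeg : 2 ≤ (C.neighborSet u).ncard :=
        two_le_deg_of_leaf_adj htree hleaf hu h0v h0u
      refine ⟨u, (hdeg_iff u).mpr hudeg, Or.inr ⟨hleaf, hu⟩,
        tmin_leaf htree hw hleaf hu h0v h0u, ?_⟩
      intro z hz
      exact leaf_first_step htree hleaf hu hz
  obtain ⟨σa, hσa_sup, hσa_or, hta, hda⟩ := anchor a
  obtain ⟨σb, hσb_sup, hσb_or, htb, hdb⟩ := anchor b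
  -- the value identity
  have hval : wdist C w a b - tmin C w a - tmin C w b = wdist C w σa σb := by
    have h1 : wdist C w a b = wdist C w a σa + wdist C w σa b := hda b (Ne.symm hab)
    rcases eq_or_ne σa b with heq | hne
    · have hb2 : 2 ≤ (C.neighborSet b).ncard := (hdeg_iff b).mp (heq ▸ hσa_sup)
      have hbb : b = σb := by
        rcases hσb_or with h | ⟨hbl, -⟩
        · exact h
        · exact absurd hbl (by simp only [IsLeaf]; omega)
      have e0 : wdist C w σa b = 0 := by rw [heq, wdist_self htree]
      have e1 : wdist C w σa σb = 0 := by rw [heq, ← hbb, wdist_self htree]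
      have e2 : tmin C w b = 0 := by rw [htb, ← hbb, wdist_self htree]
      linarith
    · have h2 : wdist C w b σa = wdist C w b σb + wdist C w σb σa := hdb σa hne
      have hsym1 : wdist C w σa b = wdist C w b σa := wdist_symm htree σa b
      have hsym2 : wdist C w σb σa = wdist C w σa σb := wdist_symm htree σb σa
      linarith
  rcases eq_or_ne x₁ x₂ with hx | hx
  · -- star case: the spine is a single vertex
    subst hx
    have hsup : ∀ v ∈ p.support, v = x₁ := by
      cases p with
      | nil => intro v hv; simpa using hv
      | cons h q =>
        exact absurd q.end_mem_support ((Walk.cons_isPath_iff _ _).mp hp).2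
    have hmem : ∀ v : Fin n, v ∈ insert x₁ {v : Fin n | IsLeaf C v ∧ C.Adj v x₁} := by
      intro v
      obtain ⟨σ, hσ, hor, -, -⟩ := anchor v
      have hσ1 : σ = x₁ := hsup σ hσ
      rcases hor with rfl | ⟨hl, hadj⟩
      · rw [hσ1]; exact Set.mem_insert _ _
      · exact Set.mem_insert_of_mem _ ⟨hl, hσ1 ▸ hadj⟩
    exact Or.inl ⟨hmem a, hmem b⟩
  · have ht1 : tmin C w x₁ = 0 :=
      tmin_eq_zero htree hw ((hdeg_iff x₁).mp p.start_mem_support)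
    have ht2 : tmin C w x₂ = 0 :=
      tmin_eq_zero htree hw ((hdeg_iff x₂).mp p.end_mem_support)
    have hmx := hmax x₁ x₂ hx
    rw [ht1, ht2, hval] at hmx
    obtain ⟨hle, heqc⟩ := spine_bound htree hw hp hσa_sup hσb_sup
    rcases heqc (by linarith) with ⟨h1, h2⟩ | ⟨h1, h2⟩
    · left
      constructor
      · rcases hσa_or with rfl | ⟨hl, hadj⟩
        · rw [h1]; exact Set.mem_insert _ _
        · exact Set.mem_insert_of_mem _ ⟨hl, h1 ▸ hadj⟩
      · rcases hσb_or with rfl | ⟨hl, hadj⟩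
        · rw [h2]; exact Set.mem_insert _ _
        · exact Set.mem_insert_of_mem _ ⟨hl, h2 ▸ hadj⟩
    · right
      constructor
      · rcases hσb_or with rfl | ⟨hl, hadj⟩
        · rw [h1]; exact Set.mem_insert _ _
        · exact Set.mem_insert_of_mem _ ⟨hl, h1 ▸ hadj⟩
      · rcases hσa_or with rfl | ⟨hl, hadj⟩
        · rw [h2]; exact Set.mem_insert _ _
        · exact Set.mem_insert_of_mem _ ⟨hl, h2 ▸ hadj⟩
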